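/- Let X_1,…,X_n be i.i.d. with density f supported on [x_L, x_R) with 0 < δ ≤ f ≤ Δ, and let the kernel K be nonnegative with compact support. Then the local linear density estimator of Cattaneo, Jansson, and Ma at the right boundary x_R, f̂(x_R) = e_1'·argmin_β Σᵢ { F̂(Xᵢ) − r_1(Xᵢ − x_R)'β }² K((Xᵢ − x_R)/h), with F̂ the empirical CDF and r_1(u) = (1,u)', does not have a finite second moment: E[f̂(x_R)²] = +∞. -/

import Mathlib

open MeasureTheory Matrix
open scoped Classical

/-- The local linear (p = 1) density estimator of Cattaneo–Jansson–Ma at the point `xR`: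
the slope (second coefficient) of the weighted least squares fit of the empirical CDF values
`F̂(Xᵢ)` on `(1, Xᵢ - xR)` with weights `K((Xᵢ - xR)/h)`. -/
noncomputable def lpdSlope (n : ℕ) (K : ℝ → ℝ) (h xR : ℝ) (ω : Fin n → ℝ) : ℝ :=
  let w : Fin n → ℝ := fun i => K ((ω i - xR) / h)
  let Fhat : Fin n → ℝ := fun i =>
    (n : ℝ)⁻¹ * ((Finset.univ.filter fun j => ω j ≤ ω i).card : ℝ)
  let G : Matrix (Fin 2) (Fin 2) ℝ :=
    Matrix.of fun k l => ∑ i, w i * (ω i - xR) ^ ((k : ℕ) + (l : ℕ))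
  let b : Fin 2 → ℝ := fun k => ∑ i, w i * (ω i - xR) ^ (k : ℕ) * Fhat i
  (G⁻¹ *ᵥ b) 1

/-- Let `X₁, …, Xₙ` be i.i.d. with density `f` supported on `[x_L, x_R)` with
`0 < δ ≤ f ≤ Δ`, and let the kernel `K` be nonnegative and compactly supported (vanishing
outside `[-1,1]`, positive on `(-1,0]`). Then the local linear density estimator at the right
boundary `x_R` does not have a finite second moment: `E[f̂(x_R)²] = +∞`. -/
lemma slope_two_points (w0 w1 u0 u1 F0 F1 : ℝ) (hw0 : w0 ≠ 0) (hw1 : w1 ≠ 0)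
    (hu : u0 ≠ u1)
    (G : Matrix (Fin 2) (Fin 2) ℝ)
    (hG : ∀ k l : Fin 2, G k l = w0 * u0 ^ ((k:ℕ)+(l:ℕ)) + w1 * u1 ^ ((k:ℕ)+(l:ℕ)))
    (b : Fin 2 → ℝ)
    (hb : ∀ k : Fin 2, b k = w0 * u0 ^ (k:ℕ) * F0 + w1 * u1 ^ (k:ℕ) * F1) :
    (G⁻¹ *ᵥ b) 1 = (F1 - F0) / (u1 - u0) := by
  have h10 : u1 - u0 ≠ 0 := sub_ne_zero.mpr (Ne.symm hu)
  have hdet : G.det = w0 * w1 * (u0 - u1)^2 := by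
    rw [Matrix.det_fin_two, hG, hG, hG, hG]
    simp only [Fin.isValue, Fin.val_zero, Fin.val_one]
    ring
  have hd : G.det ≠ 0 := by
    rw [hdet]
    exact mul_ne_zero (mul_ne_zero hw0 hw1) (pow_ne_zero _ (sub_ne_zero.mpr hu))
  have hd' : w0 * w1 * (u0 - u1)^2 ≠ 0 := hdet ▸ hd
  have hinv : G⁻¹ = G.det⁻¹ • !![G 1 1, -(G 0 1); -(G 1 0), G 0 0] := by
    rw [Matrix.inv_def, Matrix.adjugate_fin_two, Ring.inverse_eq_inv]
  rw [hinv]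
  have key : ((G.det⁻¹ • !![G 1 1, -(G 0 1); -(G 1 0), G 0 0]) *ᵥ b) 1
      = G.det⁻¹ * (-(G 1 0) * b 0 + G 0 0 * b 1) := by
    simp [Matrix.mulVec, dotProduct, Fin.sum_univ_two]
    ring
  rw [key, hG, hG, hb, hb, hdet]
  simp only [Fin.isValue, Fin.val_zero, Fin.val_one, pow_zero, pow_one]
  rw [inv_mul_eq_div, div_eq_div_iff hd' h10]
  ring

lemma sum_eq_two {n : ℕ} (hn : 3 ≤ n) (g : Fin n → ℝ)
    (hg : ∀ i : Fin n, i ≠ ⟨0, by omega⟩ → i ≠ ⟨1, by omega⟩ → g i = 0) :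
    ∑ i, g i = g ⟨0, by omega⟩ + g ⟨1, by omega⟩ := by
  have h01 : (⟨0, by omega⟩ : Fin n) ≠ ⟨1, by omega⟩ := by simp [Fin.ext_iff]
  have hsub := Finset.sum_subset
    (Finset.subset_univ ({⟨0, by omega⟩, ⟨1, by omega⟩} : Finset (Fin n)))
    (fun x _ hx => hg x (fun h => hx (by simp [h])) (fun h => hx (by simp [h])))
  rw [← hsub, Finset.sum_pair h01]

lemma lpdSlope_on_event {n : ℕ} (hn : 3 ≤ n) (K : ℝ → ℝ) {h xR : ℝ} (hh : 0 < h)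
    (hK_supp : ∀ u, u ∉ Set.Icc (-1 : ℝ) 1 → K u = 0)
    (hK_pos : ∀ u ∈ Set.Ioc (-1 : ℝ) 0, 0 < K u)
    (ω : Fin n → ℝ)
    (h0 : ω ⟨0, by omega⟩ ∈ Set.Ioo (xR - h) xR)
    (h1 : ω ⟨1, by omega⟩ ∈ Set.Ioo (xR - h) xR)
    (h01 : ω ⟨0, by omega⟩ < ω ⟨1, by omega⟩)
    (hrest : ∀ i : Fin n, i ≠ ⟨0, by omega⟩ → i ≠ ⟨1, by omega⟩ → ω i < xR - h) :
    lpdSlope n K h xR ω = (n : ℝ)⁻¹ / (ω ⟨1, by omega⟩ - ω ⟨0, by omega⟩) := by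
  set i0 : Fin n := ⟨0, by omega⟩
  set i1 : Fin n := ⟨1, by omega⟩
  have hne : i0 ≠ i1 := by simp [i0, i1, Fin.ext_iff]
  have hw0 : 0 < K ((ω i0 - xR) / h) := by
    apply hK_pos
    constructor
    · rw [lt_div_iff₀ hh]; linarith [h0.1]
    · apply div_nonpos_of_nonpos_of_nonneg <;> linarith [h0.2]
  have hw1 : 0 < K ((ω i1 - xR) / h) := by
    apply hK_pos
    constructor
    · rw [lt_div_iff₀ hh]; linarith [h1.1]
    · apply div_nonpos_of_nonpos_of_nonneg <;> linarith [h1.2]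
  have hwz : ∀ i : Fin n, i ≠ i0 → i ≠ i1 → K ((ω i - xR) / h) = 0 := by
    intro i hi0 hi1
    apply hK_supp
    intro hmem
    have h2 : (ω i - xR) / h < -1 := by
      rw [div_lt_iff₀ hh]; have := hrest i hi0 hi1; linarith
    exact absurd hmem.1 (by linarith)
  have hF1 : (Finset.univ.filter fun j => ω j ≤ ω i1).card = n := by
    rw [Finset.filter_true_of_mem, Finset.card_univ, Fintype.card_fin]
    intro j _
    by_cases hj0 : j = i0
    · rw [hj0]; exact le_of_lt h01
    by_cases hj1 : j = i1
    · rw [hj1]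
    have := hrest j hj0 hj1
    linarith [h1.1]
  have hF0 : (Finset.univ.filter fun j => ω j ≤ ω i0).card = n - 1 := by
    have : (Finset.univ.filter fun j => ω j ≤ ω i0) = Finset.univ.erase i1 := by
      ext j
      simp only [Finset.mem_filter, Finset.mem_univ, true_and, Finset.mem_erase, and_true]
      constructor
      · intro hj hj1
        rw [hj1] at hj; linarith
      · intro hj1
        by_cases hj0 : j = i0
        · rw [hj0]
        have := hrest j hj0 hj1
        linarith [h0.1]
    rw [this, Finset.card_erase_of_mem (Finset.mem_univ _), Finset.card_univ, Fintype.card_fin]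
  simp only [lpdSlope]
  rw [slope_two_points (K ((ω i0 - xR)/h)) (K ((ω i1 - xR)/h)) (ω i0 - xR) (ω i1 - xR)
      ((n : ℝ)⁻¹ * ((n - 1 : ℕ) : ℝ)) ((n : ℝ)⁻¹ * (n : ℝ)) hw0.ne' hw1.ne'
      (by intro hcontra; apply hne; ext; simp; linarith [sub_left_inj.mp hcontra]) _ ?_ _ ?_]
  · have hd : ω i1 - xR - (ω i0 - xR) = ω i1 - ω i0 := by ring
    rw [hd]
    congr 1
    have hn1 : ((n - 1 : ℕ) : ℝ) = (n : ℝ) - 1 := by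
      have : 1 ≤ n := by omega
      push_cast [this]; ring
    have hnz : (n : ℝ) ≠ 0 := by positivity
    rw [hn1]
    field_simp
    ring
  · intro k l
    simp only [Matrix.of_apply]
    rw [sum_eq_two hn _ (fun i hi0 hi1 => by rw [hwz i hi0 hi1]; ring)]
  · intro k
    rw [sum_eq_two hn _ (fun i hi0 hi1 => by rw [hwz i hi0 hi1]; ring)]
    rw [hF0, hF1]


theorem lpd_infinite_second_moment
    (n : ℕ) (hn : 3 ≤ n) (f K : ℝ → ℝ) (xL xR δ Δ h : ℝ)
    (hδ : 0 < δ) (hΔ : δ ≤ Δ)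
    (hf_meas : Measurable f)
    (hf_supp : ∀ x, x ∉ Set.Ico xL xR → f x = 0)
    (hf_lb : ∀ x ∈ Set.Ico xL xR, δ ≤ f x)
    (hf_ub : ∀ x ∈ Set.Ico xL xR, f x ≤ Δ)
    (hf_dens : ∫ x, f x = 1)
    (hK_nonneg : ∀ u, 0 ≤ K u)
    (hK_compact : HasCompactSupport K)
    (hK_supp : ∀ u, u ∉ Set.Icc (-1 : ℝ) 1 → K u = 0)
    (hK_pos : ∀ u ∈ Set.Ioc (-1 : ℝ) 0, 0 < K u)
    (hh : 0 < h) (hhlt : h < xR - xL) :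
    ∫⁻ ω, ENNReal.ofReal ((lpdSlope n K h xR ω) ^ 2)
      ∂(Measure.pi fun _ : Fin n => volume.withDensity fun x => ENNReal.ofReal (f x)) = ⊤ := by
  set μ0 : Measure ℝ := volume.withDensity fun x => ENNReal.ofReal (f x) with hμ0
  -- finiteness of μ0
  haveI hfin : IsFiniteMeasure μ0 := by
    constructor
    rw [hμ0, withDensity_apply _ MeasurableSet.univ, Measure.restrict_univ]
    calc ∫⁻ x, ENNReal.ofReal (f x)
        ≤ ∫⁻ x, (Set.Ico xL xR).indicator (fun _ => ENNReal.ofReal Δ) x := by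
          apply lintegral_mono
          intro x
          by_cases hx : x ∈ Set.Ico xL xR
          · rw [Set.indicator_of_mem hx]; exact ENNReal.ofReal_le_ofReal (hf_ub x hx)
          · simp [Set.indicator_of_notMem hx, hf_supp x hx]
      _ = ENNReal.ofReal Δ * volume (Set.Ico xL xR) := by
          rw [lintegral_indicator measurableSet_Ico, setLIntegral_const]
      _ < ⊤ := ENNReal.mul_lt_top ENNReal.ofReal_lt_top
          (by rw [Real.volume_Ico]; exact ENNReal.ofReal_lt_top)
  set i0 : Fin n := ⟨0, by omega⟩ with hi0def
  set i1 : Fin n := ⟨1, by omega⟩ with hi1def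
  have hne01 : i0 ≠ i1 := by simp [hi0def, hi1def, Fin.ext_iff]
  set c : ℝ := xR - h/2 with hc
  set ε : ℕ → ℝ := fun k => h / 2^(k+3) with hε
  have hεpos : ∀ k, 0 < ε k := fun k => by rw [hε]; positivity
  have hεle : ∀ k, ε k ≤ h/8 := by
    intro k
    rw [hε]
    have h8 : (8:ℝ) ≤ 2^(k+3) := by
      calc (8:ℝ) = 2^3 := by norm_num
        _ ≤ 2^(k+3) := pow_le_pow_right₀ one_le_two (by omega)
    rw [div_le_div_iff₀ (by positivity) (by norm_num)]
    nlinarith [hh.le]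
  have hεdbl : ∀ k l : ℕ, k < l → 2 * ε l ≤ ε k := by
    intro k l hkl
    show 2 * (h / 2^(l+3)) ≤ h / 2^(k+3)
    have e : 2 * (h / 2^(l+3)) = h / 2^(l+2) := by
      rw [pow_succ]; ring
    rw [e, div_le_div_iff₀ (by positivity) (by positivity)]
    have hple : (2:ℝ)^(k+3) ≤ 2^(l+2) := pow_le_pow_right₀ one_le_two (by omega)
    nlinarith [hh.le]
  set m : ℝ := xR - h - xL with hm
  have hmpos : 0 < m := by rw [hm]; linarith
  clear_value c ε m
  set t : ℕ → Fin n → Set ℝ := fun k i =>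
    if i = i0 then Set.Ioo (c - 2*ε k) (c - ε k)
    else if i = i1 then Set.Ioo c (c + ε k)
    else Set.Ico xL (xR - h) with ht
  set S : ℕ → Set (Fin n → ℝ) := fun k => Set.univ.pi (t k) with hS
  have htmeas : ∀ k i, MeasurableSet (t k i) := by
    intro k i
    rw [ht]
    dsimp only
    split_ifs
    · exact measurableSet_Ioo
    · exact measurableSet_Ioo
    · exact measurableSet_Ico
  have hSmeas : ∀ k, MeasurableSet (S k) := fun k => MeasurableSet.univ_pi (htmeas k)
  -- membership extraction
  have hmem0 : ∀ k (ω : Fin n → ℝ), ω ∈ S k → ω i0 ∈ Set.Ioo (c - 2*ε k) (c - ε k) := by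
    intro k ω hω
    have := hω i0 (Set.mem_univ _)
    simpa [ht] using this
  have hmem1 : ∀ k (ω : Fin n → ℝ), ω ∈ S k → ω i1 ∈ Set.Ioo c (c + ε k) := by
    intro k ω hω
    have := hω i1 (Set.mem_univ _)
    simpa [ht, Ne.symm hne01] using this
  have hmemr : ∀ k (ω : Fin n → ℝ), ω ∈ S k → ∀ i, i ≠ i0 → i ≠ i1 →
      ω i ∈ Set.Ico xL (xR - h) := by
    intro k ω hω i hi0 hi1
    have := hω i (Set.mem_univ _)
    simpa [ht, hi0, hi1] using this
  -- disjointness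
  have hkey : ∀ k l, k < l → Disjoint (S k) (S l) := by
    intro k l hkl
    rw [Set.disjoint_left]
    intro ω hωk hωl
    have hk0 := hmem0 k ω hωk
    have hl0 := hmem0 l ω hωl
    have h2 : 2 * ε l ≤ ε k := hεdbl k l hkl
    have := hk0.2
    have := hl0.1
    linarith
  have hdisj : Pairwise (Function.onFun Disjoint S) := by
    intro k l hkl
    rcases hkl.lt_or_gt with h' | h'
    · exact hkey k l h'
    · exact (hkey l k h').symm
  -- per-coordinate measure lower bounds
  have hμIoo : ∀ a b : ℝ, Set.Ioo a b ⊆ Set.Ico xL xR →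
      ENNReal.ofReal (δ * (b - a)) ≤ μ0 (Set.Ioo a b) := by
    intro a b hsub
    rw [hμ0, withDensity_apply _ measurableSet_Ioo]
    calc ENNReal.ofReal (δ * (b - a))
        = ENNReal.ofReal δ * volume (Set.Ioo a b) := by
          rw [Real.volume_Ioo, ← ENNReal.ofReal_mul hδ.le]
      _ = ∫⁻ _x in Set.Ioo a b, ENNReal.ofReal δ ∂volume := (setLIntegral_const _ _).symm
      _ ≤ ∫⁻ x in Set.Ioo a b, ENNReal.ofReal (f x) ∂volume :=
          setLIntegral_mono' measurableSet_Ioo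
            (fun x hx => ENNReal.ofReal_le_ofReal (hf_lb x (hsub hx)))
  have hμB : ENNReal.ofReal (δ * m) ≤ μ0 (Set.Ico xL (xR - h)) := by
    rw [hμ0, withDensity_apply _ measurableSet_Ico]
    calc ENNReal.ofReal (δ * m)
        = ENNReal.ofReal δ * volume (Set.Ico xL (xR - h)) := by
          rw [Real.volume_Ico, ← ENNReal.ofReal_mul hδ.le, hm]
      _ = ∫⁻ _x in Set.Ico xL (xR - h), ENNReal.ofReal δ ∂volume := (setLIntegral_const _ _).symm
      _ ≤ ∫⁻ x in Set.Ico xL (xR - h), ENNReal.ofReal (f x) ∂volume :=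
          setLIntegral_mono' measurableSet_Ico
            (fun x hx => ENNReal.ofReal_le_ofReal
              (hf_lb x ⟨hx.1, by linarith [hx.2]⟩))
  -- interval inclusions
  have hI0sub : ∀ k, Set.Ioo (c - 2*ε k) (c - ε k) ⊆ Set.Ioo (xR - h) xR := by
    intro k x hx
    have h1 := hεpos k
    have h2 := hεle k
    have ha := hx.1
    have hb := hx.2
    exact ⟨by linarith, by linarith⟩
  have hI1sub : ∀ k, Set.Ioo c (c + ε k) ⊆ Set.Ioo (xR - h) xR := by
    intro k x hx
    have h1 := hεpos k
    have h2 := hεle k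
    have ha := hx.1
    have hb := hx.2
    exact ⟨by linarith, by linarith⟩
  have hIooIco : Set.Ioo (xR - h) xR ⊆ Set.Ico xL xR := by
    intro x hx
    exact ⟨by linarith [hx.1], hx.2⟩
  -- constant
  have hnR : (0:ℝ) < n := by
    have : 0 < n := by omega
    exact_mod_cast this
  set c0 : ℝ := δ^2 * (δ*m)^(n-2) / (9 * (n:ℝ)^2) with hc0
  have hc0pos : 0 < c0 := by
    rw [hc0]
    apply div_pos
    · exact mul_pos (pow_pos hδ 2) (pow_pos (mul_pos hδ hmpos) _)
    · positivity
  -- the measure of S k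
  have hSk_meas : ∀ k, (Measure.pi fun _ : Fin n => μ0) (S k)
      = μ0 (Set.Ioo (c - 2*ε k) (c - ε k)) *
        (μ0 (Set.Ioo c (c + ε k)) * μ0 (Set.Ico xL (xR - h)) ^ (n - 2)) := by
    intro k
    rw [hS]
    dsimp only
    rw [Measure.pi_pi]
    have hmem1' : i1 ∈ Finset.univ.erase i0 :=
      Finset.mem_erase.mpr ⟨Ne.symm hne01, Finset.mem_univ _⟩
    rw [← Finset.mul_prod_erase Finset.univ _ (Finset.mem_univ i0),
        ← Finset.mul_prod_erase _ _ hmem1']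
    have hrest_eq : ∀ i ∈ (Finset.univ.erase i0).erase i1,
        μ0 (t k i) = μ0 (Set.Ico xL (xR - h)) := by
      intro i hi
      have hi1 : i ≠ i1 := (Finset.mem_erase.mp hi).1
      have hi0 : i ≠ i0 := (Finset.mem_erase.mp (Finset.mem_erase.mp hi).2).1
      rw [ht]
      dsimp only
      rw [if_neg hi0, if_neg hi1]
    rw [Finset.prod_congr rfl hrest_eq, Finset.prod_const]
    have hcard : ((Finset.univ.erase i0).erase i1).card = n - 2 := by
      rw [Finset.card_erase_of_mem hmem1', Finset.card_erase_of_mem (Finset.mem_univ _),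
        Finset.card_univ, Fintype.card_fin]
      omega
    rw [hcard, ht]
    dsimp only
    rw [if_pos rfl, if_neg (Ne.symm hne01), if_pos rfl]
  -- main per-k bound
  have hmain : ∀ k, ENNReal.ofReal c0 ≤
      ∫⁻ ω in S k, ENNReal.ofReal ((lpdSlope n K h xR ω) ^ 2)
        ∂(Measure.pi fun _ : Fin n => μ0) := by
    intro k
    set q : ℝ := ((3 * (n:ℝ) * ε k)^2)⁻¹ with hq
    have hqpos : 0 < q := by
      rw [hq]
      have := hεpos k
      positivity
    -- pointwise slope bound on S k
    have hslope : ∀ ω ∈ S k, q ≤ (lpdSlope n K h xR ω) ^ 2 := by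
      intro ω hω
      have h0 := hI0sub k (hmem0 k ω hω)
      have h1 := hI1sub k (hmem1 k ω hω)
      have hlt : ω i0 < ω i1 := by
        have a := (hmem0 k ω hω).2
        have b := (hmem1 k ω hω).1
        linarith [hεpos k]
      have hrest' : ∀ i : Fin n, i ≠ i0 → i ≠ i1 → ω i < xR - h := by
        intro i hi0 hi1
        exact (hmemr k ω hω i hi0 hi1).2
      rw [lpdSlope_on_event hn K hh hK_supp hK_pos ω h0 h1 hlt hrest']
      set d : ℝ := ω i1 - ω i0 with hd
      have hdpos : 0 < d := by rw [hd]; linarith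
      have hdle : d ≤ 3 * ε k := by
        have a := (hmem0 k ω hω).1
        have b := (hmem1 k ω hω).2
        rw [hd]; linarith
      have heq : ((n:ℝ)⁻¹ / d)^2 = (((n:ℝ) * d)^2)⁻¹ := by
        rw [division_def, ← mul_inv, inv_pow]
      rw [heq, hq]
      refine inv_anti₀ (pow_pos (mul_pos hnR hdpos) 2) ?_
      have hnd : (n:ℝ) * d ≤ 3 * (n:ℝ) * ε k := by nlinarith
      have h0nd : 0 ≤ (n:ℝ) * d := le_of_lt (mul_pos hnR hdpos)
      nlinarith
    calc ENNReal.ofReal c0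
        = ENNReal.ofReal (q * (δ * ε k * (δ * ε k * (δ*m)^(n-2)))) := by
          congr 1
          rw [hc0, hq]
          have hεne : ε k ≠ 0 := (hεpos k).ne'
          have hnne : (n:ℝ) ≠ 0 := hnR.ne'
          field_simp
          ring
      _ = ENNReal.ofReal q * (ENNReal.ofReal (δ * ε k) *
            (ENNReal.ofReal (δ * ε k) * ENNReal.ofReal (δ*m) ^ (n-2))) := by
          rw [ENNReal.ofReal_mul hqpos.le, ENNReal.ofReal_mul (mul_pos hδ (hεpos k)).le,
            ENNReal.ofReal_mul (mul_pos hδ (hεpos k)).le,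
            ENNReal.ofReal_pow (mul_pos hδ hmpos).le]
      _ ≤ ENNReal.ofReal q * ((Measure.pi fun _ : Fin n => μ0) (S k)) := by
          rw [hSk_meas k]
          apply mul_le_mul' le_rfl
          apply mul_le_mul'
          · have : δ * ε k = δ * ((c - ε k) - (c - 2*ε k)) := by ring
            rw [this]
            exact hμIoo _ _ (fun x hx => hIooIco (hI0sub k hx))
          apply mul_le_mul'
          · have : δ * ε k = δ * ((c + ε k) - c) := by ring
            rw [this]
            exact hμIoo _ _ (fun x hx => hIooIco (hI1sub k hx))
          · exact pow_le_pow_left' hμB _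
      _ = ∫⁻ _ω in S k, ENNReal.ofReal q ∂(Measure.pi fun _ : Fin n => μ0) :=
          (setLIntegral_const _ _).symm
      _ ≤ ∫⁻ ω in S k, ENNReal.ofReal ((lpdSlope n K h xR ω) ^ 2)
            ∂(Measure.pi fun _ : Fin n => μ0) :=
          setLIntegral_mono' (hSmeas k)
            (fun ω hω => ENNReal.ofReal_le_ofReal (hslope ω hω))
  -- conclusion
  refine top_unique ?_
  calc (⊤ : ENNReal)
      = ∑' _k : ℕ, ENNReal.ofReal c0 :=
        (ENNReal.tsum_const_eq_top_of_ne_zero (ENNReal.ofReal_pos.mpr hc0pos).ne').symm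
    _ ≤ ∑' k : ℕ, ∫⁻ ω in S k, ENNReal.ofReal ((lpdSlope n K h xR ω) ^ 2)
          ∂(Measure.pi fun _ : Fin n => μ0) := ENNReal.tsum_le_tsum hmain
    _ = ∫⁻ ω in ⋃ k, S k, ENNReal.ofReal ((lpdSlope n K h xR ω) ^ 2)
          ∂(Measure.pi fun _ : Fin n => μ0) := (lintegral_iUnion hSmeas hdisj _).symm
    _ ≤ ∫⁻ ω, ENNReal.ofReal ((lpdSlope n K h xR ω) ^ 2)
          ∂(Measure.pi fun _ : Fin n => μ0) := setLIntegral_le_lintegral _ _
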